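/- In the reduction from t-veto-WCCDV to t-approval-WCCAV: given a t-veto election (C,V) with |C| = m, maximum voter weight ω_max, padding candidate set D with |C|+|D| divisible by t, and the constructed t-approval election E' = (C', V') as in the construction, every candidate c ∈ C has t-approval score in E' equal to ω_max + s_c, where s_c is c's t-veto score in (C,V), and every candidate in C' \ C has t-approval score at most ω_max in E'. -/

import Mathlib

/-- Approval score: total weight of votes approving candidate `c`. -/
def appScore {γ : Type*} [DecidableEq γ] (M : Multiset (ℕ × Finset γ)) (c : γ) : ℕ :=
  (M.map (fun u => if c ∈ u.2 then u.1 else 0)).sum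
lemma appScore_add {γ : Type*} [DecidableEq γ] (M N : Multiset (ℕ × Finset γ)) (c : γ) :
    appScore (M + N) c = appScore M c + appScore N c := by
  simp [appScore]

lemma appScore_sum {γ ι : Type*} [DecidableEq γ] (s : Finset ι)
    (W : ι → Multiset (ℕ × Finset γ)) (c : γ) :
    appScore (∑ i ∈ s, W i) c = ∑ i ∈ s, appScore (W i) c := by
  classical
  induction s using Finset.induction with
  | empty => simp [appScore]
  | insert a s h ih => simp [Finset.sum_insert h, appScore_add, ih]

lemma appScore_eq {γ : Type*} [DecidableEq γ] (M : Multiset (ℕ × Finset γ)) (c : γ) (w : ℕ)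
    (hw : ∀ u ∈ M, c ∈ u.2 → u.1 = w) :
    appScore M c = w * Multiset.countP (fun u => c ∈ u.2) M := by
  classical
  induction M using Multiset.induction with
  | empty => simp [appScore]
  | cons a M ih =>
    have h1 : appScore (a ::ₘ M) c = (if c ∈ a.2 then a.1 else 0) + appScore M c := by
      simp [appScore]
    rw [h1, ih (fun u hu => hw u (Multiset.mem_cons_of_mem hu)),
      Multiset.countP_cons]
    by_cases h : c ∈ a.2
    · simp [h, hw a (Multiset.mem_cons_self a M) h, Nat.mul_add, Nat.add_comm]
    · simp [h]

lemma appScore_le {γ : Type*} [DecidableEq γ] (M : Multiset (ℕ × Finset γ)) (c : γ) (w : ℕ)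
    (hw : ∀ u ∈ M, u.1 ≤ w) :
    appScore M c ≤ w * Multiset.countP (fun u => c ∈ u.2) M := by
  classical
  induction M using Multiset.induction with
  | empty => simp [appScore]
  | cons a M ih =>
    have h1 : appScore (a ::ₘ M) c = (if c ∈ a.2 then a.1 else 0) + appScore M c := by
      simp [appScore]
    rw [h1, Multiset.countP_cons]
    have ih' := ih (fun u hu => hw u (Multiset.mem_cons_of_mem hu))
    by_cases h : c ∈ a.2
    · simp only [h, if_true, Nat.mul_add, Nat.mul_one]
      have := hw a (Multiset.mem_cons_self a M)
      omega
    · simpa [h] using ih'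
/-- In the reduction from `t`-veto-WCCDV to `t`-approval-WCCAV, with original
candidates `α` (`|α| = m`), padding candidates `D` (type `δ`) and fresh padding candidates
(type `π`); original `t`-veto voters `v i` of weight `(v i).1 ≤ ωmax` and veto set `(v i).2`
of size `t`; `V0` consisting of weight-`ωmax` `t`-approval votes approving each candidate of
`C ∪ D` exactly once and no fresh padding candidate; and for each `i` a collection `W i` of
`m − t` votes of weight `(v i).1` approving each candidate approved by `v i` exactly once
(none vetoed by `v i`, no `D` candidates), each fresh padding candidate being approved in at
most one vote of the whole election `E' = V0 + Σ_i W i` — every `c ∈ C` has `t`-approval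
score `ωmax + s_c` in `E'` (`s_c` being `c`'s `t`-veto score in `(C,V)`), and every other
candidate has `t`-approval score at most `ωmax`. -/
theorem stmt12 {α δ π : Type*} [DecidableEq α] [DecidableEq δ] [DecidableEq π] [Fintype α]
    (t m n ωmax : ℕ) (hm : Fintype.card α = m) (htm : t ≤ m)
    (v : Fin n → ℕ × Finset α)
    (hvt : ∀ i, (v i).2.card = t)
    (hvw : ∀ i, (v i).1 ≤ ωmax)
    (V0 : Multiset (ℕ × Finset (α ⊕ δ ⊕ π)))
    (hV0w : ∀ u ∈ V0, u.1 = ωmax)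
    (hV0t : ∀ u ∈ V0, u.2.card = t)
    (hV0pad : ∀ u ∈ V0, ∀ pp : π, Sum.inr (Sum.inr pp) ∉ u.2)
    (hV0once : ∀ c : α, Multiset.countP (fun u => Sum.inl c ∈ u.2) V0 = 1)
    (hV0onceD : ∀ dd : δ, Multiset.countP (fun u => Sum.inr (Sum.inl dd) ∈ u.2) V0 = 1)
    (W : Fin n → Multiset (ℕ × Finset (α ⊕ δ ⊕ π)))
    (hWw : ∀ i, ∀ u ∈ W i, u.1 = (v i).1)
    (hWt : ∀ i, ∀ u ∈ W i, u.2.card = t)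
    (hWcard : ∀ i, Multiset.card (W i) = m - t)
    (hWapp : ∀ i, ∀ c : α, c ∉ (v i).2 →
      Multiset.countP (fun u => Sum.inl c ∈ u.2) (W i) = 1)
    (hWveto : ∀ i, ∀ c : α, c ∈ (v i).2 →
      Multiset.countP (fun u => Sum.inl c ∈ u.2) (W i) = 0)
    (hWD : ∀ i, ∀ u ∈ W i, ∀ dd : δ, Sum.inr (Sum.inl dd) ∉ u.2)
    (hfresh : ∀ pp : π,
      Multiset.countP (fun u => Sum.inr (Sum.inr pp) ∈ u.2) (V0 + ∑ i, W i) ≤ 1) :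
    (∀ c : α, appScore (V0 + ∑ i, W i) (Sum.inl c) =
        ωmax + ∑ i, (if c ∈ (v i).2 then 0 else (v i).1)) ∧
    (∀ x : δ ⊕ π, appScore (V0 + ∑ i, W i) (Sum.inr x) ≤ ωmax) := by
  constructor
  · intro c
    rw [appScore_add, appScore_sum]
    have hv0 : appScore V0 (Sum.inl c) = ωmax := by
      rw [appScore_eq V0 _ ωmax (fun u hu _ => hV0w u hu), hV0once c, Nat.mul_one]
    rw [hv0]
    congr 1
    refine Finset.sum_congr rfl (fun i _ => ?_)
    by_cases h : c ∈ (v i).2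
    · simp only [h, if_true]
      rw [appScore_eq (W i) _ ((v i).1) (fun u hu _ => hWw i u hu), hWveto i c h,
        Nat.mul_zero]
    · simp only [h, if_false]
      rw [appScore_eq (W i) _ ((v i).1) (fun u hu _ => hWw i u hu), hWapp i c h,
        Nat.mul_one]
  · intro x
    rw [appScore_add]
    cases x with
    | inl dd =>
      have hv0 : appScore V0 (Sum.inr (Sum.inl dd)) = ωmax := by
        rw [appScore_eq V0 _ ωmax (fun u hu _ => hV0w u hu), hV0onceD dd, Nat.mul_one]
      have hW : appScore (∑ i, W i) (Sum.inr (Sum.inl dd)) = 0 := by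
        rw [appScore_sum]
        refine Finset.sum_eq_zero (fun i _ => ?_)
        have hcnt : Multiset.countP (fun u => Sum.inr (Sum.inl dd) ∈ u.2) (W i) = 0 := by
          rw [Multiset.countP_eq_zero]
          intro u hu
          exact hWD i u hu dd
        have := appScore_le (W i) (Sum.inr (Sum.inl dd)) ωmax (fun u hu => by
          rw [hWw i u hu]; exact hvw i)
        rw [hcnt, Nat.mul_zero] at this
        omega
      omega
    | inr pp =>
      have hv0 : appScore V0 (Sum.inr (Sum.inr pp)) = 0 := by
        have hcnt : Multiset.countP (fun u => Sum.inr (Sum.inr pp) ∈ u.2) V0 = 0 := by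
          rw [Multiset.countP_eq_zero]
          exact fun u hu => hV0pad u hu pp
        have := appScore_le V0 (Sum.inr (Sum.inr pp)) ωmax (fun u hu => (hV0w u hu).le)
        rw [hcnt, Nat.mul_zero] at this
        omega
      have hcnt : Multiset.countP (fun u => Sum.inr (Sum.inr pp) ∈ u.2) (∑ i, W i) ≤ 1 := by
        have := hfresh pp
        rw [Multiset.countP_add] at this
        omega
      have hW := appScore_le (∑ i, W i) (Sum.inr (Sum.inr pp)) ωmax (fun u hu => by
        rw [Multiset.mem_sum] at hu
        obtain ⟨i, _, hi⟩ := hu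
        rw [hWw i u hi]; exact hvw i)
      have : ωmax * Multiset.countP (fun u => Sum.inr (Sum.inr pp) ∈ u.2) (∑ i, W i) ≤ ωmax := by
        calc _ ≤ ωmax * 1 := Nat.mul_le_mul_left _ hcnt
        _ = ωmax := Nat.mul_one _
      omega
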